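/- Let L ≥ 1, let B, B̃ ∈ ℝ^{L×L} with B̃ invertible, and let ψ, ψ̃ > 0 be real. Let E = e_L e_Lᵀ be the L×L matrix whose only nonzero entry is a 1 in position (L,L). Suppose θ ∈ ℂ has nonzero imaginary part and (v; w) ∈ ℂ^{2L} is a nonzero vector with [[B, ψI],[−E, Bᵀ]] (v; w) = θ [[B̃, ψ̃I],[−E, B̃ᵀ]] (v; w). Then v ≠ 0, the real number v*(B̃ᵀB̃ + ψ̃E)v is strictly positive, and |1 − θ|² = (v*(B−B̃)ᵀ(B−B̃)v) / (v*(B̃ᵀB̃ + ψ̃E)v). -/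

import Mathlib

open Matrix

lemma myStarMulVec {L : ℕ} (A : Matrix (Fin L) (Fin L) ℝ) (x : Fin L → ℂ) :
    (A.map Complex.ofReal) *ᵥ (star x) = star ((A.map Complex.ofReal) *ᵥ x) := by
  funext i
  simp [Matrix.mulVec, dotProduct, Matrix.map_apply, Pi.star_apply, Complex.star_def,
    map_sum, Complex.conj_ofReal]

lemma myDotTranspose {L : ℕ} (A : Matrix (Fin L) (Fin L) ℂ) (x y : Fin L → ℂ) :
    x ⬝ᵥ (Aᵀ *ᵥ y) = (A *ᵥ x) ⬝ᵥ y := by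
  rw [Matrix.dotProduct_mulVec, Matrix.vecMul_transpose]

lemma myDotSelf {L : ℕ} (x : Fin L → ℂ) :
    star x ⬝ᵥ x = ((∑ i, Complex.normSq (x i) : ℝ) : ℂ) := by
  simp [dotProduct, Pi.star_apply, Complex.star_def, Complex.normSq_eq_conj_mul_self]

lemma mySumNormSqPos {L : ℕ} (x : Fin L → ℂ) (hx : x ≠ 0) :
    0 < ∑ i, Complex.normSq (x i) := by
  obtain ⟨i, hi⟩ := Function.ne_iff.mp hx
  exact Finset.sum_pos' (fun j _ => Complex.normSq_nonneg _)
    ⟨i, Finset.mem_univ i, Complex.normSq_pos.mpr hi⟩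

lemma myQuad (P Q R : ℝ) (s : ℂ) (hs : s.im ≠ 0)
    (h : (P:ℂ) + s^2 * Q + s * R = 0) : P = Complex.normSq s * Q := by
  have hre := congrArg Complex.re h
  have him := congrArg Complex.im h
  simp [Complex.add_re, Complex.add_im, Complex.mul_re, Complex.mul_im, pow_two] at hre him
  have h3 : 2 * s.re * Q + R = 0 := by
    apply mul_left_cancel₀ hs
    rw [mul_zero]; linear_combination him
  rw [Complex.normSq_apply]; linear_combination hre - s.re * h3

/-- The L×L matrix whose only nonzero entry is a 1 in the bottom-right corner. -/
def cornerMat (L : ℕ) : Matrix (Fin L) (Fin L) ℝ :=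
  fun i j => if (i : ℕ) = L - 1 ∧ (j : ℕ) = L - 1 then 1 else 0

/-- The terminal-cost block matrix [[B, ψI],[−E, Bᵀ]]. -/
def terminalBlock (L : ℕ) (B : Matrix (Fin L) (Fin L) ℝ) (ψ : ℝ) :
    Matrix (Fin L ⊕ Fin L) (Fin L ⊕ Fin L) ℝ :=
  Matrix.fromBlocks B (ψ • (1 : Matrix (Fin L) (Fin L) ℝ)) (-(cornerMat L)) Bᵀ

theorem terminal_cost_nonreal_eigenvalue_identity
    (L : ℕ) (hL : 1 ≤ L) (B Bt : Matrix (Fin L) (Fin L) ℝ) (hBt : IsUnit Bt)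
    (ψ ψt : ℝ) (hψ : 0 < ψ) (hψt : 0 < ψt)
    (θ : ℂ) (hθ : θ.im ≠ 0) (v w : Fin L → ℂ) (hvw : Sum.elim v w ≠ 0)
    (heig : ((terminalBlock L B ψ).map Complex.ofReal).mulVec (Sum.elim v w) =
      θ • ((terminalBlock L Bt ψt).map Complex.ofReal).mulVec (Sum.elim v w)) :
    v ≠ 0 ∧
    ∃ d : ℝ, 0 < d ∧
      (d : ℂ) = star v ⬝ᵥ ((Btᵀ * Bt + ψt • cornerMat L).map Complex.ofReal).mulVec v ∧
      (‖1 - θ‖ ^ 2 : ℂ) =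
        (star v ⬝ᵥ (((B - Bt)ᵀ * (B - Bt)).map Complex.ofReal).mulVec v) / (d : ℂ) := by
  have hL' : L - 1 < L := by omega
  set k : Fin L := ⟨L - 1, hL'⟩ with hk
  set B' := B.map Complex.ofReal with hB'def
  set Bt' := Bt.map Complex.ofReal with hBt'def
  set E' := (cornerMat L).map Complex.ofReal with hE'def
  -- unpack heig
  have hsmul : ∀ (r : ℝ), ((r • (1 : Matrix (Fin L) (Fin L) ℝ)).map Complex.ofReal)
      = (r : ℂ) • (1 : Matrix (Fin L) (Fin L) ℂ) := by
    intro r; ext i j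
    simp [Matrix.map_apply, Matrix.one_apply, apply_ite Complex.ofReal]
  have hneg : ((-(cornerMat L)).map Complex.ofReal) = -E' := by
    ext i j; simp [Matrix.map_apply, hE'def]
  rw [terminalBlock, terminalBlock, Matrix.fromBlocks_map, Matrix.fromBlocks_map,
    hsmul, hsmul, hneg, Matrix.transpose_map, Matrix.transpose_map,
    Matrix.fromBlocks_mulVec, Matrix.fromBlocks_mulVec] at heig
  have E1 : ∀ i, (B' *ᵥ v) i + (ψ : ℂ) * w i = θ * ((Bt' *ᵥ v) i + (ψt : ℂ) * w i) := by
    intro i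
    have h := congrFun heig (Sum.inl i)
    simpa [Matrix.smul_mulVec, Matrix.one_mulVec, hB'def, hBt'def] using h
  have E2 : ∀ i, -((E' *ᵥ v) i) + (B'ᵀ *ᵥ w) i
      = θ * (-((E' *ᵥ v) i) + (Bt'ᵀ *ᵥ w) i) := by
    intro i
    have h := congrFun heig (Sum.inr i)
    simpa [Matrix.neg_mulVec, hB'def, hBt'def, hE'def] using h
  -- rearranged equations
  have hM : B' *ᵥ v - θ • (Bt' *ᵥ v) = (θ * ψt - ψ) • w := by
    funext i
    simp only [Pi.sub_apply, Pi.smul_apply, smul_eq_mul]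
    linear_combination E1 i
  have hN : B'ᵀ *ᵥ w - θ • (Bt'ᵀ *ᵥ w) = (1 - θ) • (E' *ᵥ v) := by
    funext i
    simp only [Pi.sub_apply, Pi.smul_apply, smul_eq_mul]
    linear_combination E2 i
  -- v ≠ 0
  have hv : v ≠ 0 := by
    intro hv0
    have hw : w ≠ 0 := by
      intro hw0; apply hvw; funext s; cases s <;> simp [hv0, hw0]
    have h0 : (θ * ψt - ψ) • w = 0 := by
      have := hM
      rw [hv0] at this
      simpa [Matrix.mulVec_zero] using this.symm
    rcases smul_eq_zero.mp h0 with h | h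
    · apply hθ
      have him := congrArg Complex.im h
      simp [Complex.sub_im, Complex.mul_im, Complex.ofReal_im, Complex.ofReal_re] at him
      rcases him with h1 | h1
      · exact h1
      · exact absurd h1 (ne_of_gt hψt)
    · exact hw h
  -- notation
  set a := Bt' *ᵥ v with ha
  set b := B' *ᵥ v with hb
  -- corner vector computation
  have hEv : E' *ᵥ v = fun i => if i = k then v k else 0 := by
    funext i
    have hterm : ∀ j : Fin L,
        (((cornerMat L) i j : ℝ) : ℂ) * v j = if i = k ∧ j = k then v j else 0 := by
      intro j
      simp only [cornerMat, hk, Fin.ext_iff]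
      split <;> simp_all
    simp only [hE'def, Matrix.mulVec, dotProduct, Matrix.map_apply]
    rw [Finset.sum_congr rfl fun j _ => hterm j]
    by_cases hi : i = k
    · simp [hi]
    · simp [hi]
  have he : star v ⬝ᵥ (E' *ᵥ v) = ((Complex.normSq (v k) : ℝ) : ℂ) := by
    rw [hEv]
    simp [dotProduct, Pi.star_apply, Complex.star_def, mul_ite,
      Complex.normSq_eq_conj_mul_self]
  -- the key equation
  set z := b - θ • a with hz
  have hzw : z = (θ * ψt - ψ) • w := hM
  have hzz : B'ᵀ *ᵥ z - θ • (Bt'ᵀ *ᵥ z) = ((θ * ψt - ψ) * (1 - θ)) • (E' *ᵥ v) := by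
    rw [hzw, Matrix.mulVec_smul, Matrix.mulVec_smul, smul_comm θ, ← smul_sub, hN,
      smul_smul]
  have hkey : star b ⬝ᵥ z - θ * (star a ⬝ᵥ z)
      = (θ * ψt - ψ) * (1 - θ) * ((Complex.normSq (v k) : ℝ) : ℂ) := by
    have hdot := congrArg (fun x => star v ⬝ᵥ x) hzz
    simp only [dotProduct_sub, dotProduct_smul, smul_eq_mul] at hdot
    rw [myDotTranspose, myDotTranspose] at hdot
    have hsb : B' *ᵥ star v = star b := myStarMulVec B v
    have hsa : Bt' *ᵥ star v = star a := myStarMulVec Bt v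
    rw [hsb, hsa, he] at hdot
    convert hdot using 2 <;> ring
  -- real scalars
  set u := b - a with hu
  set PP := ∑ i, Complex.normSq (u i) with hPP
  set QQ := ∑ i, Complex.normSq (a i) with hQQ
  set BB := ∑ i, Complex.normSq (b i) with hBB
  set ee := Complex.normSq (v k) with hee
  have hbb : star b ⬝ᵥ b = (BB : ℂ) := myDotSelf b
  have hqq : star a ⬝ᵥ a = (QQ : ℂ) := myDotSelf a
  have hppc : star u ⬝ᵥ u = (PP : ℂ) := myDotSelf u
  have hsum : star b ⬝ᵥ a + star a ⬝ᵥ b = (BB : ℂ) + (QQ : ℂ) - (PP : ℂ) := by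
    have h1 : star u ⬝ᵥ u
        = star b ⬝ᵥ b - star b ⬝ᵥ a - star a ⬝ᵥ b + star a ⬝ᵥ a := by
      rw [hu, star_sub, sub_dotProduct, dotProduct_sub, dotProduct_sub]
      ring
    rw [hppc, hbb, hqq] at h1
    linear_combination h1
  have hz1 : star b ⬝ᵥ z = (BB : ℂ) - θ * (star b ⬝ᵥ a) := by
    rw [hz, dotProduct_sub, dotProduct_smul, hbb, smul_eq_mul]
  have hz2 : star a ⬝ᵥ z = star a ⬝ᵥ b - θ * (QQ : ℂ) := by
    rw [hz, dotProduct_sub, dotProduct_smul, hqq, smul_eq_mul]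
  rw [hz1, hz2] at hkey
  -- the quadratic in s = 1 - θ
  have hquad : ((PP : ℂ)) + (1 - θ)^2 * ((QQ + ψt * ee : ℝ) : ℂ)
      + (1 - θ) * ((BB - QQ - PP - (ψt - ψ) * ee : ℝ) : ℂ) = 0 := by
    push_cast
    linear_combination hkey + θ * hsum
  have hsim : (1 - θ).im ≠ 0 := by
    simp only [Complex.sub_im, Complex.one_im, zero_sub, ne_eq, neg_eq_zero]
    exact hθ
  have hPQ : PP = Complex.normSq (1 - θ) * (QQ + ψt * ee) :=
    myQuad PP (QQ + ψt * ee) (BB - QQ - PP - (ψt - ψ) * ee) (1 - θ) hsim hquad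
  -- positivity
  have haz : a ≠ 0 := by
    intro h0
    apply hv
    have hdet : Bt'.det = ((Bt.det : ℝ) : ℂ) := by
      rw [hBt'def]
      exact (RingHom.map_det Complex.ofRealHom Bt).symm
    have hunit : IsUnit Bt'.det := by
      rw [hdet]
      exact ((Matrix.isUnit_iff_isUnit_det Bt).mp hBt).map Complex.ofRealHom
    have hinv : Bt'⁻¹ * Bt' = 1 := Matrix.nonsing_inv_mul _ hunit
    calc v = (Bt'⁻¹ * Bt') *ᵥ v := by rw [hinv, Matrix.one_mulVec]
    _ = Bt'⁻¹ *ᵥ (Bt' *ᵥ v) := (Matrix.mulVec_mulVec v Bt'⁻¹ Bt').symm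
    _ = 0 := by rw [← ha, h0, Matrix.mulVec_zero]
  have hQQpos : 0 < QQ := mySumNormSqPos a haz
  have heenn : 0 ≤ ee := Complex.normSq_nonneg _
  have hdpos : 0 < QQ + ψt * ee := by nlinarith
  refine ⟨hv, QQ + ψt * ee, hdpos, ?_, ?_⟩
  · -- identification of d
    have hmap : ((Btᵀ * Bt + ψt • cornerMat L).map Complex.ofReal)
        = Bt'ᵀ * Bt' + (ψt : ℂ) • E' := by
      ext i j
      simp only [Matrix.map_apply, Matrix.add_apply, Matrix.mul_apply, Matrix.smul_apply,
        Matrix.transpose_apply, hBt'def, hE'def, smul_eq_mul]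
      push_cast
      ring
    rw [hmap, Matrix.add_mulVec, dotProduct_add, Matrix.smul_mulVec,
      dotProduct_smul, he, ← Matrix.mulVec_mulVec, myDotTranspose]
    have hsa : Bt' *ᵥ star v = star a := myStarMulVec Bt v
    rw [hsa, ← ha, hqq, smul_eq_mul]
    push_cast
    ring
  · -- the main identity
    have hmapD : (((B - Bt)ᵀ * (B - Bt)).map Complex.ofReal) = (B' - Bt')ᵀ * (B' - Bt') := by
      ext i j
      simp only [Matrix.map_apply, Matrix.mul_apply, Matrix.sub_apply, Matrix.transpose_apply,
        hB'def, hBt'def]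
      push_cast
      ring
    have hsub : (B' - Bt') *ᵥ v = u := by
      rw [Matrix.sub_mulVec, hu, ha, hb]
    have hsubs : (B' - Bt') *ᵥ star v = star u := by
      rw [Matrix.sub_mulVec]
      have hsb : B' *ᵥ star v = star b := myStarMulVec B v
      have hsa : Bt' *ᵥ star v = star a := myStarMulVec Bt v
      rw [hsb, hsa, hu, star_sub]
    have hnum : star v ⬝ᵥ ((((B - Bt)ᵀ * (B - Bt)).map Complex.ofReal) *ᵥ v) = (PP : ℂ) := by
      rw [hmapD, ← Matrix.mulVec_mulVec, myDotTranspose, hsubs, hsub, hppc]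
    have hdne : ((QQ + ψt * ee : ℝ) : ℂ) ≠ 0 := by
      exact_mod_cast ne_of_gt hdpos
    rw [hnum, eq_div_iff hdne]
    norm_cast
    rw [Complex.sq_norm]
    linarith [hPQ]
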